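/- Let G be a subcubic graph with a list assignment L with |L(e)| ≥ 10 for all edges, such that G is not strongly L-edge-colorable but every proper subgraph is. Then G contains no triangle. -/
import Mathlib


def StrongSees {V : Type*} (G : SimpleGraph V) (e e' : Sym2 V) : Prop :=
  (∃ v, v ∈ e ∧ v ∈ e') ∨ (∃ u v, u ∈ e ∧ v ∈ e' ∧ G.Adj u v)

def IsStrongEdgeColoring {V β : Type*} (G : SimpleGraph V) (c : Sym2 V → β) : Prop :=
  ∀ e ∈ G.edgeSet, ∀ e' ∈ G.edgeSet, e ≠ e' → StrongSees G e e' → c e ≠ c e'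

def StronglyListColorable {V β : Type*} (G : SimpleGraph V) (L : Sym2 V → Finset β) : Prop :=
  ∃ c : Sym2 V → β, IsStrongEdgeColoring G c ∧ ∀ e ∈ G.edgeSet, c e ∈ L e

private lemma strongSees_symm {V : Type*} {G : SimpleGraph V} {e e' : Sym2 V}
    (h : StrongSees G e e') : StrongSees G e' e := by
  rcases h with ⟨v, h1, h2⟩ | ⟨u, v, h1, h2, h3⟩
  · exact Or.inl ⟨v, h2, h1⟩
  · exact Or.inr ⟨v, u, h2, h1, h3.symm⟩

private lemma sees_endpoint {V : Type*} {G : SimpleGraph V} {x y : V} {e' : Sym2 V}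
    (h : StrongSees G s(x, y) e') :
    ∃ v, v ∈ e' ∧ (v = x ∨ v = y ∨ G.Adj x v ∨ G.Adj y v) := by
  rcases h with ⟨v, h1, h2⟩ | ⟨u, v, h1, h2, h3⟩
  · rcases Sym2.mem_iff.mp h1 with hv | hv
    · exact ⟨v, h2, Or.inl hv⟩
    · exact ⟨v, h2, Or.inr (Or.inl hv)⟩
  · rcases Sym2.mem_iff.mp h1 with hu | hu
    · exact ⟨v, h2, Or.inr (Or.inr (Or.inl (hu ▸ h3)))⟩
    · exact ⟨v, h2, Or.inr (Or.inr (Or.inr (hu ▸ h3)))⟩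

private lemma exists_good {V β : Type*} {L : Sym2 V → Finset β} (c : Sym2 V → β)
    {e₀ : Sym2 V} (hLcard : 10 ≤ (L e₀).card) (P : Sym2 V → Prop)
    (S : Finset (Sym2 V)) (hS : S.card ≤ 9)
    (hcover : ∀ e', P e' → e' ∈ S) :
    ∃ b ∈ L e₀, ∀ e', P e' → b ≠ c e' := by
  classical
  have h1 : (S.image c).card ≤ 9 := le_trans Finset.card_image_le hS
  have h2 := Finset.card_le_card_sdiff_add_card (s := L e₀) (t := S.image c)
  obtain ⟨b, hb⟩ := Finset.card_pos.mp (by omega : 0 < (L e₀ \ S.image c).card)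
  rw [Finset.mem_sdiff] at hb
  exact ⟨b, hb.1, fun e' hP heq => hb.2 (heq ▸ Finset.mem_image_of_mem c (hcover e' hP))⟩

private lemma ext_step {V β : Type*} [DecidableEq V] {G : SimpleGraph V} {L : Sym2 V → Finset β} {c : Sym2 V → β}
    {D : Finset (Sym2 V)}
    (hc : ∀ e ∈ G.edgeSet, e ∉ D → c e ∈ L e)
    (hs : ∀ e ∈ G.edgeSet, e ∉ D → ∀ e' ∈ G.edgeSet, e' ∉ D → e ≠ e' →
      StrongSees G e e' → c e ≠ c e')
    {e₀ : Sym2 V} {b : β} (hbL : b ∈ L e₀)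
    (hb : ∀ e' ∈ G.edgeSet, e' ∉ D.erase e₀ → e' ≠ e₀ → StrongSees G e₀ e' → b ≠ c e') :
    ∃ c' : Sym2 V → β,
      (∀ e ∈ G.edgeSet, e ∉ D.erase e₀ → c' e ∈ L e) ∧
      (∀ e ∈ G.edgeSet, e ∉ D.erase e₀ → ∀ e' ∈ G.edgeSet, e' ∉ D.erase e₀ → e ≠ e' →
        StrongSees G e e' → c' e ≠ c' e') := by
  classical
  refine ⟨fun e => if e = e₀ then b else c e, ?_, ?_⟩
  · intro e heG heD
    by_cases h : e = e₀
    · simpa [h] using hbL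
    · have hD : e ∉ D := fun hD => heD (Finset.mem_erase.mpr ⟨h, hD⟩)
      simpa [h] using hc e heG hD
  · intro e heG heD e' he'G he'D hne hsee
    by_cases h1 : e = e₀ <;> by_cases h2 : e' = e₀
    · exact absurd (h1.trans h2.symm) hne
    · simpa [h1, h2] using hb e' he'G he'D h2 (h1 ▸ hsee)
    · simpa [h1, h2] using (hb e heG heD h1 (strongSees_symm (h2 ▸ hsee))).symm
    · have hD : e ∉ D := fun hD => heD (Finset.mem_erase.mpr ⟨h1, hD⟩)
      have hD' : e' ∉ D := fun hD => he'D (Finset.mem_erase.mpr ⟨h2, hD⟩)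
      simpa [h1, h2] using hs e heG hD e' he'G hD' hne hsee

private lemma card_sdiff_one {α : Type*} [DecidableEq α] {s : Finset α} {a : α}
    (ha : a ∈ s) (h : s.card ≤ 3) : (s \ {a}).card ≤ 2 := by
  rw [Finset.card_sdiff_of_subset (Finset.singleton_subset_iff.mpr ha), Finset.card_singleton]
  omega

private lemma card_sdiff_two {α : Type*} [DecidableEq α] {s : Finset α} {a b : α}
    (ha : a ∈ s) (hb : b ∈ s) (hab : a ≠ b) (h : s.card ≤ 3) : (s \ {a, b}).card ≤ 1 := by
  have hsub : ({a, b} : Finset α) ⊆ s := by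
    intro x hx; rcases Finset.mem_insert.mp hx with rfl | hx
    · exact ha
    · exact Finset.mem_singleton.mp hx ▸ hb
  rw [Finset.card_sdiff_of_subset hsub, Finset.card_insert_of_notMem (by simpa using hab),
    Finset.card_singleton]
  omega
/-- A minimal counterexample (with lists of size at least 10) has no triangle. -/
theorem minimal_counterexample_triangle_free
    {V β : Type*} [Fintype V] (G : SimpleGraph V) [DecidableRel G.Adj]
    (hΔ : G.maxDegree ≤ 3) (L : Sym2 V → Finset β)
    (hL : ∀ e ∈ G.edgeSet, 10 ≤ (L e).card)
    (hG : ¬ StronglyListColorable G L)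
    (hmin : ∀ H : SimpleGraph V, H ≤ G → H ≠ G → StronglyListColorable H L) :
    G.CliqueFree 3 := by
  classical
  intro t ht
  obtain ⟨x, y, z, hxy, hxz, hyz, rfl⟩ := Finset.card_eq_three.mp ht.card_eq
  have axy : G.Adj x y := ht.1 (by simp) (by simp) hxy
  have axz : G.Adj x z := ht.1 (by simp) (by simp) hxz
  have ayz : G.Adj y z := ht.1 (by simp) (by simp) hyz
  have cardI : ∀ v : V, (G.incidenceFinset v).card ≤ 3 := fun v => by
    rw [SimpleGraph.card_incidenceFinset_eq_degree]
    exact le_trans (G.degree_le_maxDegree v) hΔ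
  have cardN : ∀ v : V, (G.neighborFinset v).card ≤ 3 := fun v => by
    rw [SimpleGraph.card_neighborFinset_eq_degree]
    exact le_trans (G.degree_le_maxDegree v) hΔ
  have memInc : ∀ {e : Sym2 V} {v : V}, e ∈ G.edgeSet → v ∈ e → e ∈ G.incidenceFinset v :=
    fun he hv => by rw [SimpleGraph.mem_incidenceFinset]; exact ⟨he, hv⟩
  have incL : ∀ {u v : V}, G.Adj u v → s(u, v) ∈ G.incidenceFinset u :=
    fun h => memInc (G.mem_edgeSet.mpr h) (Sym2.mem_mk_left _ _)
  have incR : ∀ {u v : V}, G.Adj u v → s(u, v) ∈ G.incidenceFinset v :=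
    fun h => memInc (G.mem_edgeSet.mpr h) (Sym2.mem_mk_right _ _)
  have memN : ∀ {u v : V}, G.Adj u v → v ∈ G.neighborFinset u := fun h => by
    rw [SimpleGraph.mem_neighborFinset]; exact h
  have adjN : ∀ {u v : V}, v ∈ G.neighborFinset u → G.Adj u v := fun h => by
    rwa [SimpleGraph.mem_neighborFinset] at h
  have ne_of_nmem : ∀ {e : Sym2 V} {u v : V}, u ∉ e → e ≠ s(u, v) :=
    fun hu h => hu (by rw [h]; exact Sym2.mem_mk_left _ _)
  have notMem_pair : ∀ {e e1 e2 : Sym2 V}, e ≠ e1 → e ≠ e2 →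
      e ∉ ({e1, e2} : Finset (Sym2 V)) := by
    intro e e1 e2 h1 h2 h
    rcases Finset.mem_insert.mp h with h | h
    · exact h1 h
    · exact h2 (Finset.mem_singleton.mp h)
  have hxy_ne_xz : s(x,y) ≠ s(x,z) := fun h => hyz (Sym2.congr_right.mp h)
  have hxy_ne_yz : s(x,y) ≠ s(y,z) := fun h => by
    rcases Sym2.mem_iff.mp (h ▸ Sym2.mem_mk_left x y) with h' | h'
    · exact hxy h'
    · exact hxz h'
  have hxz_ne_yz : s(x,z) ≠ s(y,z) := fun h => hxy (Sym2.congr_left.mp h)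
  -- the subgraph obtained by deleting all edges at x
  have hHne : G.deleteEdges (G.incidenceSet x) ≠ G := by
    intro h
    have hadj : (G.deleteEdges (G.incidenceSet x)).Adj x y := by rw [h]; exact axy
    rw [SimpleGraph.deleteEdges_adj] at hadj
    exact hadj.2 (G.mk'_mem_incidenceSet_left_iff.mpr axy)
  obtain ⟨c0, hc0s, hc0l⟩ := hmin _ (SimpleGraph.deleteEdges_le _) hHne
  have memH : ∀ {e : Sym2 V}, e ∈ G.edgeSet → x ∉ e →
      e ∈ (G.deleteEdges (G.incidenceSet x)).edgeSet := by
    intro e he hx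
    rw [SimpleGraph.edgeSet_deleteEdges]
    exact ⟨he, fun hi => hx hi.2⟩
  have notF : ∀ {e : Sym2 V}, e ∈ G.edgeSet → e ∉ G.incidenceFinset x → x ∉ e :=
    fun he hF' hx => hF' (memInc he hx)
  have base_c : ∀ e ∈ G.edgeSet, e ∉ G.incidenceFinset x → c0 e ∈ L e :=
    fun e he hD => hc0l e (memH he (notF he hD))
  have base_s : ∀ e ∈ G.edgeSet, e ∉ G.incidenceFinset x → ∀ e' ∈ G.edgeSet,
      e' ∉ G.incidenceFinset x → e ≠ e' → StrongSees G e e' → c0 e ≠ c0 e' := by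
    intro e he hD e' he' hD' hne hsee
    refine hc0s e (memH he (notF he hD)) e' (memH he' (notF he' hD')) hne ?_
    rcases hsee with ⟨v, h1, h2⟩ | ⟨u, v, h1, h2, h3⟩
    · exact Or.inl ⟨v, h1, h2⟩
    · refine Or.inr ⟨u, v, h1, h2, ?_⟩
      rw [SimpleGraph.deleteEdges_adj]
      refine ⟨h3, fun hmem => ?_⟩
      rcases Sym2.mem_iff.mp hmem.2 with rfl | rfl
      · exact notF he hD h1
      · exact notF he' hD' h2
  have key : ∃ c1 : Sym2 V → β,
      (∀ e ∈ G.edgeSet, e ∉ ({s(x,y), s(x,z)} : Finset (Sym2 V)) → c1 e ∈ L e) ∧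
      (∀ e ∈ G.edgeSet, e ∉ ({s(x,y), s(x,z)} : Finset (Sym2 V)) →
        ∀ e' ∈ G.edgeSet, e' ∉ ({s(x,y), s(x,z)} : Finset (Sym2 V)) → e ≠ e' →
        StrongSees G e e' → c1 e ≠ c1 e') := by
    rcases Finset.eq_empty_or_nonempty (G.incidenceFinset x \ {s(x,y), s(x,z)}) with hFE | ⟨e₃, he₃⟩
    · have hsub : G.incidenceFinset x ⊆ {s(x,y), s(x,z)} :=
        Finset.sdiff_eq_empty_iff_subset.mp hFE
      exact ⟨c0, fun e he hD => base_c e he (fun h => hD (hsub h)),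
        fun e he hD e' he' hD' => base_s e he (fun h => hD (hsub h)) e' he' (fun h => hD' (hsub h))⟩
    · rw [Finset.mem_sdiff] at he₃
      obtain ⟨he₃F, he₃p⟩ := he₃
      have he₃xy : e₃ ≠ s(x,y) := fun h => he₃p (by simp [h])
      have he₃xz : e₃ ≠ s(x,z) := fun h => he₃p (by simp [h])
      have hxe₃ : x ∈ e₃ := by
        rw [SimpleGraph.mem_incidenceFinset] at he₃F
        exact he₃F.2
      obtain ⟨w, rfl⟩ := Sym2.mem_iff_exists.mp hxe₃
      have axw : G.Adj x w := by
        rw [SimpleGraph.mem_incidenceFinset] at he₃F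
        exact G.mem_edgeSet.mp he₃F.1
      have hwy : w ≠ y := fun h => he₃xy (by rw [h])
      have hwz : w ≠ z := fun h => he₃xz (by rw [h])
      have hyzw : ({y, z, w} : Finset V).card = 3 := by
        rw [Finset.card_insert_of_notMem (by simp [hyz, Ne.symm hwy]),
          Finset.card_insert_of_notMem (by simp [Ne.symm hwz]), Finset.card_singleton]
      have hNx : ({y, z, w} : Finset V) = G.neighborFinset x := by
        apply Finset.eq_of_subset_of_card_le
        · intro v hv
          rw [SimpleGraph.mem_neighborFinset]
          rcases Finset.mem_insert.mp hv with rfl | hv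
          · exact axy
          rcases Finset.mem_insert.mp hv with rfl | hv
          · exact axz
          · exact (Finset.mem_singleton.mp hv) ▸ axw
        · rw [hyzw]; exact cardN x
      have hcardA : ((G.incidenceFinset w \ {s(x,w)}) ∪ (G.incidenceFinset y \ {s(x,y)}) ∪
          (G.incidenceFinset z \ {s(x,z), s(y,z)}) ∪
          (G.neighborFinset w \ {x}).biUnion (fun a => G.incidenceFinset a \ {s(w,a)})).card ≤ 9 := by
        have h1 : (G.incidenceFinset w \ {s(x,w)}).card ≤ 2 := card_sdiff_one (incR axw) (cardI w)
        have h2 : (G.incidenceFinset y \ {s(x,y)}).card ≤ 2 := card_sdiff_one (incR axy) (cardI y)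
        have h3 : (G.incidenceFinset z \ {s(x,z), s(y,z)}).card ≤ 1 :=
          card_sdiff_two (incR axz) (incR ayz) hxz_ne_yz (cardI z)
        have h4 : ((G.neighborFinset w \ {x}).biUnion
            (fun a => G.incidenceFinset a \ {s(w,a)})).card ≤ 4 := by
          have hNwc : (G.neighborFinset w \ {x}).card ≤ 2 :=
            card_sdiff_one (memN axw.symm) (cardN w)
          have hbu := Finset.card_biUnion_le_card_mul (G.neighborFinset w \ {x})
            (fun a => G.incidenceFinset a \ {s(w,a)}) 2 (fun a ha =>
              card_sdiff_one
                (incR (adjN (Finset.mem_sdiff.mp ha).1)) (cardI a))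
          omega
        have u1 := Finset.card_union_le (G.incidenceFinset w \ {s(x,w)})
          (G.incidenceFinset y \ {s(x,y)})
        have u2 := Finset.card_union_le
          ((G.incidenceFinset w \ {s(x,w)}) ∪ (G.incidenceFinset y \ {s(x,y)}))
          (G.incidenceFinset z \ {s(x,z), s(y,z)})
        have u3 := Finset.card_union_le
          ((G.incidenceFinset w \ {s(x,w)}) ∪ (G.incidenceFinset y \ {s(x,y)}) ∪
            (G.incidenceFinset z \ {s(x,z), s(y,z)}))
          ((G.neighborFinset w \ {x}).biUnion (fun a => G.incidenceFinset a \ {s(w,a)}))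
        omega
      have hcovA : ∀ e', (e' ∈ G.edgeSet ∧ e' ∉ (G.incidenceFinset x).erase s(x,w) ∧
          e' ≠ s(x,w) ∧ StrongSees G s(x,w) e') →
          e' ∈ ((G.incidenceFinset w \ {s(x,w)}) ∪ (G.incidenceFinset y \ {s(x,y)}) ∪
            (G.incidenceFinset z \ {s(x,z), s(y,z)}) ∪
            (G.neighborFinset w \ {x}).biUnion (fun a => G.incidenceFinset a \ {s(w,a)})) := by
        rintro e' ⟨he'G, hD, hne, hsee⟩
        have hx' : x ∉ e' := notF he'G (fun h => hD (Finset.mem_erase.mpr ⟨hne, h⟩))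
        have routeW : w ∈ e' → e' ∈ G.incidenceFinset w \ {s(x,w)} := fun hw =>
          Finset.mem_sdiff.mpr ⟨memInc he'G hw, Finset.notMem_singleton.mpr (ne_of_nmem hx')⟩
        have routeY : y ∈ e' → e' ∈ G.incidenceFinset y \ {s(x,y)} := fun hy' =>
          Finset.mem_sdiff.mpr ⟨memInc he'G hy', Finset.notMem_singleton.mpr (ne_of_nmem hx')⟩
        simp only [Finset.mem_union]
        obtain ⟨v, hv, hcase⟩ := sees_endpoint hsee
        rcases hcase with hvv | hvv | hax | haw
        · exact absurd (hvv ▸ hv) hx'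
        · exact Or.inl (Or.inl (Or.inl (routeW (hvv ▸ hv))))
        · have hvN : v ∈ ({y, z, w} : Finset V) := by
            rw [hNx]; exact memN hax
          rcases Finset.mem_insert.mp hvN with hvv | hvN
          · exact Or.inl (Or.inl (Or.inr (routeY (hvv ▸ hv))))
          rcases Finset.mem_insert.mp hvN with hvv | hvN
          · by_cases hyz' : e' = s(y,z)
            · exact Or.inl (Or.inl (Or.inr (routeY (by rw [hyz']; exact Sym2.mem_mk_left y z))))
            · exact Or.inl (Or.inr (Finset.mem_sdiff.mpr ⟨memInc he'G (hvv ▸ hv),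
                notMem_pair (ne_of_nmem hx') hyz'⟩))
          · rw [Finset.mem_singleton] at hvN
            exact Or.inl (Or.inl (Or.inl (routeW (hvN ▸ hv))))
        · by_cases hvx : v = x
          · exact absurd (hvx ▸ hv) hx'
          by_cases hwv : e' = s(w,v)
          · exact Or.inl (Or.inl (Or.inl (routeW (by rw [hwv]; exact Sym2.mem_mk_left w v))))
          · exact Or.inr (Finset.mem_biUnion.mpr ⟨v, Finset.mem_sdiff.mpr
              ⟨memN haw, Finset.notMem_singleton.mpr hvx⟩,
              Finset.mem_sdiff.mpr ⟨memInc he'G hv, Finset.notMem_singleton.mpr hwv⟩⟩)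
      obtain ⟨b, hbL, hb⟩ := exists_good c0 (hL s(x,w) (G.mem_edgeSet.mpr axw))
        (fun e' => e' ∈ G.edgeSet ∧ e' ∉ (G.incidenceFinset x).erase s(x,w) ∧
          e' ≠ s(x,w) ∧ StrongSees G s(x,w) e') _ hcardA hcovA
      obtain ⟨c1, hc1, hs1⟩ := ext_step base_c base_s hbL
        (fun e' h1 h2 h3 h4 => hb e' ⟨h1, h2, h3, h4⟩)
      have hF3 : G.incidenceFinset x = {s(x,y), s(x,z), s(x,w)} := by
        refine (Finset.eq_of_subset_of_card_le ?_ ?_).symm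
        · intro e he
          rcases Finset.mem_insert.mp he with rfl | he
          · exact incL axy
          rcases Finset.mem_insert.mp he with rfl | he
          · exact incL axz
          · exact (Finset.mem_singleton.mp he) ▸ he₃F
        · have hc3 : ({s(x,y), s(x,z), s(x,w)} : Finset (Sym2 V)).card = 3 := by
            rw [Finset.card_insert_of_notMem
                (notMem_pair hxy_ne_xz (Ne.symm he₃xy)),
              Finset.card_insert_of_notMem (Finset.notMem_singleton.mpr (Ne.symm he₃xz)),
              Finset.card_singleton]
          rw [hc3]; exact cardI x
      have hsubA : (G.incidenceFinset x).erase s(x,w) ⊆ {s(x,y), s(x,z)} := by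
        intro e he
        rw [Finset.mem_erase, hF3] at he
        obtain ⟨hne, he⟩ := he
        rcases Finset.mem_insert.mp he with rfl | he
        · simp
        rcases Finset.mem_insert.mp he with rfl | he
        · simp
        · exact absurd (Finset.mem_singleton.mp he) hne
      exact ⟨c1, fun e he hD => hc1 e he (fun h => hD (hsubA h)),
        fun e he hD e' he' hD' => hs1 e he (fun h => hD (hsubA h)) e' he' (fun h => hD' (hsubA h))⟩
  obtain ⟨c1, hc1, hs1⟩ := key
  have hxyD : s(x,y) ∈ ({s(x,y), s(x,z)} : Finset (Sym2 V)).erase s(x,z) :=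
    Finset.mem_erase.mpr ⟨hxy_ne_xz, by simp⟩
  -- Step B : color s(x,z)
  have hcardB : ((G.incidenceFinset x \ {s(x,y), s(x,z)}) ∪ (G.incidenceFinset z \ {s(x,z)}) ∪
      (G.incidenceFinset y \ {s(x,y), s(y,z)}) ∪
      (G.neighborFinset x \ {y, z}).biUnion (fun a => G.incidenceFinset a \ {s(x,a)}) ∪
      (G.neighborFinset z \ {x, y}).biUnion (fun a => G.incidenceFinset a \ {s(z,a)})).card
      ≤ 9 := by
    have h1 : (G.incidenceFinset x \ {s(x,y), s(x,z)}).card ≤ 1 :=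
      card_sdiff_two (incL axy) (incL axz) hxy_ne_xz (cardI x)
    have h2 : (G.incidenceFinset z \ {s(x,z)}).card ≤ 2 := card_sdiff_one (incR axz) (cardI z)
    have h3 : (G.incidenceFinset y \ {s(x,y), s(y,z)}).card ≤ 1 :=
      card_sdiff_two (incR axy) (incL ayz) hxy_ne_yz (cardI y)
    have h4 : ((G.neighborFinset x \ {y, z}).biUnion
        (fun a => G.incidenceFinset a \ {s(x,a)})).card ≤ 2 := by
      have hc : (G.neighborFinset x \ {y, z}).card ≤ 1 :=
        card_sdiff_two (memN axy) (memN axz) hyz (cardN x)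
      have hbu := Finset.card_biUnion_le_card_mul (G.neighborFinset x \ {y, z})
        (fun a => G.incidenceFinset a \ {s(x,a)}) 2 (fun a ha =>
          card_sdiff_one (incR (adjN (Finset.mem_sdiff.mp ha).1)) (cardI a))
      omega
    have h5 : ((G.neighborFinset z \ {x, y}).biUnion
        (fun a => G.incidenceFinset a \ {s(z,a)})).card ≤ 2 := by
      have hc : (G.neighborFinset z \ {x, y}).card ≤ 1 :=
        card_sdiff_two (memN axz.symm) (memN ayz.symm) hxy (cardN z)
      have hbu := Finset.card_biUnion_le_card_mul (G.neighborFinset z \ {x, y})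
        (fun a => G.incidenceFinset a \ {s(z,a)}) 2 (fun a ha =>
          card_sdiff_one (incR (adjN (Finset.mem_sdiff.mp ha).1)) (cardI a))
      omega
    have u1 := Finset.card_union_le (G.incidenceFinset x \ {s(x,y), s(x,z)})
      (G.incidenceFinset z \ {s(x,z)})
    have u2 := Finset.card_union_le
      ((G.incidenceFinset x \ {s(x,y), s(x,z)}) ∪ (G.incidenceFinset z \ {s(x,z)}))
      (G.incidenceFinset y \ {s(x,y), s(y,z)})
    have u3 := Finset.card_union_le
      ((G.incidenceFinset x \ {s(x,y), s(x,z)}) ∪ (G.incidenceFinset z \ {s(x,z)}) ∪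
        (G.incidenceFinset y \ {s(x,y), s(y,z)}))
      ((G.neighborFinset x \ {y, z}).biUnion (fun a => G.incidenceFinset a \ {s(x,a)}))
    have u4 := Finset.card_union_le
      ((G.incidenceFinset x \ {s(x,y), s(x,z)}) ∪ (G.incidenceFinset z \ {s(x,z)}) ∪
        (G.incidenceFinset y \ {s(x,y), s(y,z)}) ∪
        (G.neighborFinset x \ {y, z}).biUnion (fun a => G.incidenceFinset a \ {s(x,a)}))
      ((G.neighborFinset z \ {x, y}).biUnion (fun a => G.incidenceFinset a \ {s(z,a)}))
    omega
  have hcovB : ∀ e', (e' ∈ G.edgeSet ∧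
      e' ∉ ({s(x,y), s(x,z)} : Finset (Sym2 V)).erase s(x,z) ∧
      e' ≠ s(x,z) ∧ StrongSees G s(x,z) e') →
      e' ∈ ((G.incidenceFinset x \ {s(x,y), s(x,z)}) ∪ (G.incidenceFinset z \ {s(x,z)}) ∪
        (G.incidenceFinset y \ {s(x,y), s(y,z)}) ∪
        (G.neighborFinset x \ {y, z}).biUnion (fun a => G.incidenceFinset a \ {s(x,a)}) ∪
        (G.neighborFinset z \ {x, y}).biUnion (fun a => G.incidenceFinset a \ {s(z,a)})) := by
    rintro e' ⟨he'G, hD, hne, hsee⟩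
    have hexy : e' ≠ s(x,y) := fun h => hD (h ▸ hxyD)
    have routeX : x ∈ e' →
        e' ∈ ((G.incidenceFinset x \ {s(x,y), s(x,z)}) ∪ (G.incidenceFinset z \ {s(x,z)}) ∪
          (G.incidenceFinset y \ {s(x,y), s(y,z)}) ∪
          (G.neighborFinset x \ {y, z}).biUnion (fun a => G.incidenceFinset a \ {s(x,a)}) ∪
          (G.neighborFinset z \ {x, y}).biUnion (fun a => G.incidenceFinset a \ {s(z,a)})) :=
      fun hx' => Finset.mem_union_left _ (Finset.mem_union_left _ (Finset.mem_union_left _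
        (Finset.mem_union_left _
          (Finset.mem_sdiff.mpr ⟨memInc he'G hx', notMem_pair hexy hne⟩))))
    have routeZ : z ∈ e' →
        e' ∈ ((G.incidenceFinset x \ {s(x,y), s(x,z)}) ∪ (G.incidenceFinset z \ {s(x,z)}) ∪
          (G.incidenceFinset y \ {s(x,y), s(y,z)}) ∪
          (G.neighborFinset x \ {y, z}).biUnion (fun a => G.incidenceFinset a \ {s(x,a)}) ∪
          (G.neighborFinset z \ {x, y}).biUnion (fun a => G.incidenceFinset a \ {s(z,a)})) :=
      fun hz' => Finset.mem_union_left _ (Finset.mem_union_left _ (Finset.mem_union_left _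
        (Finset.mem_union_right _
          (Finset.mem_sdiff.mpr ⟨memInc he'G hz', Finset.notMem_singleton.mpr hne⟩))))
    have routeY : y ∈ e' →
        e' ∈ ((G.incidenceFinset x \ {s(x,y), s(x,z)}) ∪ (G.incidenceFinset z \ {s(x,z)}) ∪
          (G.incidenceFinset y \ {s(x,y), s(y,z)}) ∪
          (G.neighborFinset x \ {y, z}).biUnion (fun a => G.incidenceFinset a \ {s(x,a)}) ∪
          (G.neighborFinset z \ {x, y}).biUnion (fun a => G.incidenceFinset a \ {s(z,a)})) := by
      intro hy'
      by_cases hyz' : e' = s(y,z)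
      · exact routeZ (by rw [hyz']; exact Sym2.mem_mk_right y z)
      · exact Finset.mem_union_left _ (Finset.mem_union_left _ (Finset.mem_union_right _
          (Finset.mem_sdiff.mpr ⟨memInc he'G hy', notMem_pair hexy hyz'⟩)))
    obtain ⟨v, hv, hcase⟩ := sees_endpoint hsee
    rcases hcase with hvv | hvv | hax | haz
    · exact routeX (hvv ▸ hv)
    · exact routeZ (hvv ▸ hv)
    · by_cases hvy : v = y
      · exact routeY (hvy ▸ hv)
      by_cases hvz : v = z
      · exact routeZ (hvz ▸ hv)
      by_cases hxv : e' = s(x,v)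
      · exact routeX (by rw [hxv]; exact Sym2.mem_mk_left x v)
      · exact Finset.mem_union_left _ (Finset.mem_union_right _ (Finset.mem_biUnion.mpr
          ⟨v, Finset.mem_sdiff.mpr ⟨memN hax, by simp [hvy, hvz]⟩,
            Finset.mem_sdiff.mpr ⟨memInc he'G hv, Finset.notMem_singleton.mpr hxv⟩⟩))
    · by_cases hvx : v = x
      · exact routeX (hvx ▸ hv)
      by_cases hvy : v = y
      · exact routeY (hvy ▸ hv)
      by_cases hzv : e' = s(z,v)
      · exact routeZ (by rw [hzv]; exact Sym2.mem_mk_left z v)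
      · exact Finset.mem_union_right _ (Finset.mem_biUnion.mpr
          ⟨v, Finset.mem_sdiff.mpr ⟨memN haz, by simp [hvx, hvy]⟩,
            Finset.mem_sdiff.mpr ⟨memInc he'G hv, Finset.notMem_singleton.mpr hzv⟩⟩)
  obtain ⟨b2, hb2L, hb2⟩ := exists_good c1 (hL s(x,z) (G.mem_edgeSet.mpr axz))
    (fun e' => e' ∈ G.edgeSet ∧ e' ∉ ({s(x,y), s(x,z)} : Finset (Sym2 V)).erase s(x,z) ∧
      e' ≠ s(x,z) ∧ StrongSees G s(x,z) e') _ hcardB hcovB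
  obtain ⟨c2, hc2, hs2⟩ := ext_step hc1 hs1 hb2L (fun e' h1 h2 h3 h4 => hb2 e' ⟨h1, h2, h3, h4⟩)
  have hsub2 : (({s(x,y), s(x,z)} : Finset (Sym2 V))).erase s(x,z) ⊆ {s(x,y)} := by
    intro e he
    rw [Finset.mem_erase] at he
    rcases Finset.mem_insert.mp he.2 with h | h
    · simpa using h
    · exact absurd (Finset.mem_singleton.mp h) he.1
  -- Step C : color s(x,y)
  have hcardC : ((G.incidenceFinset x \ {s(x,y)}) ∪ (G.incidenceFinset y \ {s(x,y)}) ∪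
      (G.incidenceFinset z \ {s(x,z), s(y,z)}) ∪
      (G.neighborFinset x \ {y, z}).biUnion (fun a => G.incidenceFinset a \ {s(x,a)}) ∪
      (G.neighborFinset y \ {x, z}).biUnion (fun a => G.incidenceFinset a \ {s(y,a)})).card
      ≤ 9 := by
    have h1 : (G.incidenceFinset x \ {s(x,y)}).card ≤ 2 := card_sdiff_one (incL axy) (cardI x)
    have h2 : (G.incidenceFinset y \ {s(x,y)}).card ≤ 2 := card_sdiff_one (incR axy) (cardI y)
    have h3 : (G.incidenceFinset z \ {s(x,z), s(y,z)}).card ≤ 1 :=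
      card_sdiff_two (incR axz) (incR ayz) hxz_ne_yz (cardI z)
    have h4 : ((G.neighborFinset x \ {y, z}).biUnion
        (fun a => G.incidenceFinset a \ {s(x,a)})).card ≤ 2 := by
      have hc : (G.neighborFinset x \ {y, z}).card ≤ 1 :=
        card_sdiff_two (memN axy) (memN axz) hyz (cardN x)
      have hbu := Finset.card_biUnion_le_card_mul (G.neighborFinset x \ {y, z})
        (fun a => G.incidenceFinset a \ {s(x,a)}) 2 (fun a ha =>
          card_sdiff_one (incR (adjN (Finset.mem_sdiff.mp ha).1)) (cardI a))
      omega
    have h5 : ((G.neighborFinset y \ {x, z}).biUnion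
        (fun a => G.incidenceFinset a \ {s(y,a)})).card ≤ 2 := by
      have hc : (G.neighborFinset y \ {x, z}).card ≤ 1 :=
        card_sdiff_two (memN axy.symm) (memN ayz) hxz (cardN y)
      have hbu := Finset.card_biUnion_le_card_mul (G.neighborFinset y \ {x, z})
        (fun a => G.incidenceFinset a \ {s(y,a)}) 2 (fun a ha =>
          card_sdiff_one (incR (adjN (Finset.mem_sdiff.mp ha).1)) (cardI a))
      omega
    have u1 := Finset.card_union_le (G.incidenceFinset x \ {s(x,y)})
      (G.incidenceFinset y \ {s(x,y)})
    have u2 := Finset.card_union_le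
      ((G.incidenceFinset x \ {s(x,y)}) ∪ (G.incidenceFinset y \ {s(x,y)}))
      (G.incidenceFinset z \ {s(x,z), s(y,z)})
    have u3 := Finset.card_union_le
      ((G.incidenceFinset x \ {s(x,y)}) ∪ (G.incidenceFinset y \ {s(x,y)}) ∪
        (G.incidenceFinset z \ {s(x,z), s(y,z)}))
      ((G.neighborFinset x \ {y, z}).biUnion (fun a => G.incidenceFinset a \ {s(x,a)}))
    have u4 := Finset.card_union_le
      ((G.incidenceFinset x \ {s(x,y)}) ∪ (G.incidenceFinset y \ {s(x,y)}) ∪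
        (G.incidenceFinset z \ {s(x,z), s(y,z)}) ∪
        (G.neighborFinset x \ {y, z}).biUnion (fun a => G.incidenceFinset a \ {s(x,a)}))
      ((G.neighborFinset y \ {x, z}).biUnion (fun a => G.incidenceFinset a \ {s(y,a)}))
    omega
  have hcovC : ∀ e', (e' ∈ G.edgeSet ∧
      e' ∉ ({s(x,y)} : Finset (Sym2 V)).erase s(x,y) ∧
      e' ≠ s(x,y) ∧ StrongSees G s(x,y) e') →
      e' ∈ ((G.incidenceFinset x \ {s(x,y)}) ∪ (G.incidenceFinset y \ {s(x,y)}) ∪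
        (G.incidenceFinset z \ {s(x,z), s(y,z)}) ∪
        (G.neighborFinset x \ {y, z}).biUnion (fun a => G.incidenceFinset a \ {s(x,a)}) ∪
        (G.neighborFinset y \ {x, z}).biUnion (fun a => G.incidenceFinset a \ {s(y,a)})) := by
    rintro e' ⟨he'G, hD, hne, hsee⟩
    have routeX : x ∈ e' →
        e' ∈ ((G.incidenceFinset x \ {s(x,y)}) ∪ (G.incidenceFinset y \ {s(x,y)}) ∪
          (G.incidenceFinset z \ {s(x,z), s(y,z)}) ∪
          (G.neighborFinset x \ {y, z}).biUnion (fun a => G.incidenceFinset a \ {s(x,a)}) ∪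
          (G.neighborFinset y \ {x, z}).biUnion (fun a => G.incidenceFinset a \ {s(y,a)})) :=
      fun hx' => Finset.mem_union_left _ (Finset.mem_union_left _ (Finset.mem_union_left _
        (Finset.mem_union_left _
          (Finset.mem_sdiff.mpr ⟨memInc he'G hx', Finset.notMem_singleton.mpr hne⟩))))
    have routeY : y ∈ e' →
        e' ∈ ((G.incidenceFinset x \ {s(x,y)}) ∪ (G.incidenceFinset y \ {s(x,y)}) ∪
          (G.incidenceFinset z \ {s(x,z), s(y,z)}) ∪
          (G.neighborFinset x \ {y, z}).biUnion (fun a => G.incidenceFinset a \ {s(x,a)}) ∪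
          (G.neighborFinset y \ {x, z}).biUnion (fun a => G.incidenceFinset a \ {s(y,a)})) :=
      fun hy' => Finset.mem_union_left _ (Finset.mem_union_left _ (Finset.mem_union_left _
        (Finset.mem_union_right _
          (Finset.mem_sdiff.mpr ⟨memInc he'G hy', Finset.notMem_singleton.mpr hne⟩))))
    have routeZ : z ∈ e' →
        e' ∈ ((G.incidenceFinset x \ {s(x,y)}) ∪ (G.incidenceFinset y \ {s(x,y)}) ∪
          (G.incidenceFinset z \ {s(x,z), s(y,z)}) ∪
          (G.neighborFinset x \ {y, z}).biUnion (fun a => G.incidenceFinset a \ {s(x,a)}) ∪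
          (G.neighborFinset y \ {x, z}).biUnion (fun a => G.incidenceFinset a \ {s(y,a)})) := by
      intro hz'
      by_cases hxz' : e' = s(x,z)
      · exact routeX (by rw [hxz']; exact Sym2.mem_mk_left x z)
      by_cases hyz' : e' = s(y,z)
      · exact routeY (by rw [hyz']; exact Sym2.mem_mk_left y z)
      · exact Finset.mem_union_left _ (Finset.mem_union_left _ (Finset.mem_union_right _
          (Finset.mem_sdiff.mpr ⟨memInc he'G hz', notMem_pair hxz' hyz'⟩)))
    obtain ⟨v, hv, hcase⟩ := sees_endpoint hsee
    rcases hcase with hvv | hvv | hax | hay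
    · exact routeX (hvv ▸ hv)
    · exact routeY (hvv ▸ hv)
    · by_cases hvy : v = y
      · exact routeY (hvy ▸ hv)
      by_cases hvz : v = z
      · exact routeZ (hvz ▸ hv)
      by_cases hxv : e' = s(x,v)
      · exact routeX (by rw [hxv]; exact Sym2.mem_mk_left x v)
      · exact Finset.mem_union_left _ (Finset.mem_union_right _ (Finset.mem_biUnion.mpr
          ⟨v, Finset.mem_sdiff.mpr ⟨memN hax, by simp [hvy, hvz]⟩,
            Finset.mem_sdiff.mpr ⟨memInc he'G hv, Finset.notMem_singleton.mpr hxv⟩⟩))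
    · by_cases hvx : v = x
      · exact routeX (hvx ▸ hv)
      by_cases hvz : v = z
      · exact routeZ (hvz ▸ hv)
      by_cases hyv : e' = s(y,v)
      · exact routeY (by rw [hyv]; exact Sym2.mem_mk_left y v)
      · exact Finset.mem_union_right _ (Finset.mem_biUnion.mpr
          ⟨v, Finset.mem_sdiff.mpr ⟨memN hay, by simp [hvx, hvz]⟩,
            Finset.mem_sdiff.mpr ⟨memInc he'G hv, Finset.notMem_singleton.mpr hyv⟩⟩)
  obtain ⟨b3, hb3L, hb3⟩ := exists_good c2 (hL s(x,y) (G.mem_edgeSet.mpr axy))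
    (fun e' => e' ∈ G.edgeSet ∧ e' ∉ ({s(x,y)} : Finset (Sym2 V)).erase s(x,y) ∧
      e' ≠ s(x,y) ∧ StrongSees G s(x,y) e') _ hcardC hcovC
  obtain ⟨c3, hc3, hs3⟩ := ext_step (D := {s(x,y)})
    (fun e he hD => hc2 e he (fun h => hD (hsub2 h)))
    (fun e he hD e' he' hD' => hs2 e he (fun h => hD (hsub2 h)) e' he' (fun h => hD' (hsub2 h)))
    hb3L (fun e' h1 h2 h3 h4 => hb3 e' ⟨h1, h2, h3, h4⟩)
  exact hG ⟨c3, fun e he e' he' hne hsee => hs3 e he (by simp) e' he' (by simp) hne hsee,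
    fun e he => hc3 e he (by simp)⟩
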